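/- Let q ≠ 0 and let γ : ℝ → E be a three-times differentiable unit-speed magnetic curve with charge q (γ''(t) = -q·φ(γ'(t)), ‖γ'(t)‖ = 1) that has nonvanishing first curvature (γ''(t) ≠ 0 for all t) and osculating order 2, i.e. γ'''(t) = -‖γ''(t)‖²·γ'(t) for all t. Then γ is a Legendre curve (γ'_{2n+α}(t) = 0 for all t and all α = 1,…,s) and its first curvature is ‖γ''(t)‖ = |q| for all t. -/

import Mathlib

open scoped RealInnerProductSpace

/-- The structure tensor `φ` of the standard `C`-manifold structure on `ℝ^{2n+s}`:
`(φv)_i = v_{n+i}`, `(φv)_{n+i} = -v_i` for `0 ≤ i < n`, and `(φv)_{2n+α} = 0`. -/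
noncomputable def phi (n s : ℕ) (v : EuclideanSpace ℝ (Fin (2*n+s))) :
    EuclideanSpace ℝ (Fin (2*n+s)) := WithLp.toLp 2 fun k =>
  if _h1 : (k : ℕ) < n then v ⟨n + (k : ℕ), by omega⟩
  else if _h2 : (k : ℕ) < 2*n then -v ⟨(k : ℕ) - n, by omega⟩
  else 0

/-- The index `2n+α` of the characteristic direction `ξ_α = e_{2n+α}`. -/
def idxA (n s : ℕ) (α : Fin s) : Fin (2*n+s) := ⟨2*n + (α : ℕ), by omega⟩

/-- The index `i` for `1 ≤ i ≤ n` (0-based). -/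
def idxI (n s : ℕ) (i : Fin n) : Fin (2*n+s) := ⟨(i : ℕ), by omega⟩

/-- The index `n+i` for `1 ≤ i ≤ n` (0-based). -/
def idxNI (n s : ℕ) (i : Fin n) : Fin (2*n+s) := ⟨n + (i : ℕ), by omega⟩

/-- Coordinate functions commute with `deriv`. -/
lemma deriv_euclid_apply {m : ℕ} {f : ℝ → EuclideanSpace ℝ (Fin m)}
    (hf : Differentiable ℝ f) (t : ℝ) (k : Fin m) :
    deriv (fun u => f u k) t = deriv f t k := by
  have h2 : HasDerivAt ((EuclideanSpace.proj k : EuclideanSpace ℝ (Fin m) →L[ℝ] ℝ)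
      ∘ f) ((EuclideanSpace.proj k) (deriv f t)) t :=
    (EuclideanSpace.proj k).hasFDerivAt.comp_hasDerivAt t (hf t).hasDerivAt
  exact h2.deriv

/-- A normal magnetic curve of osculating order 2 (nonvanishing `κ₁` and
`γ''' = -‖γ''‖²·γ'`) in the standard `C`-manifold `ℝ^{2n+s}` is a Legendre circle with
`κ₁ = |q|`. -/
theorem normal_magnetic_curve_order_two_is_legendre_circle
    (n s : ℕ) (hn : 0 < n) (hs : 0 < s) (q : ℝ) (hq : q ≠ 0)
    (γ : ℝ → EuclideanSpace ℝ (Fin (2*n+s)))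
    (hγ : Differentiable ℝ γ) (hγ' : Differentiable ℝ (deriv γ))
    (hγ'' : Differentiable ℝ (deriv (deriv γ)))
    (hmag : ∀ t : ℝ, deriv (deriv γ) t = (-q) • phi n s (deriv γ t))
    (hunit : ∀ t : ℝ, ‖deriv γ t‖ = 1)
    (hκ₁ : ∀ t : ℝ, deriv (deriv γ) t ≠ 0)
    (hosc : ∀ t : ℝ, deriv (deriv (deriv γ)) t =
      -(‖deriv (deriv γ) t‖ ^ 2) • deriv γ t) :
    (∀ t : ℝ, ∀ α : Fin s, deriv γ t (idxA n s α) = 0) ∧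
    (∀ t : ℝ, ‖deriv (deriv γ) t‖ = |q|) := by
  have hmag' : ∀ (t : ℝ) (k : Fin (2*n+s)),
      deriv (deriv γ) t k = -q * phi n s (deriv γ t) k := by
    intro t k
    rw [hmag t]
    simp [PiLp.smul_apply]
  -- Step A : Legendre
  have hleg : ∀ (t : ℝ) (α : Fin s), deriv γ t (idxA n s α) = 0 := by
    intro t α
    have hz : ∀ u, deriv (deriv γ) u (idxA n s α) = 0 := by
      intro u
      rw [hmag' u]
      have hp : phi n s (deriv γ u) (idxA n s α) = 0 := by
        simp only [phi, WithLp.ofLp_toLp, idxA]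
        rw [dif_neg (by omega), dif_neg (by omega)]
      rw [hp]; ring
    have h3 : deriv (deriv (deriv γ)) t (idxA n s α) = 0 := by
      rw [← deriv_euclid_apply hγ'' t]
      have he : (fun u => deriv (deriv γ) u (idxA n s α)) = fun _ => (0:ℝ) := funext hz
      rw [he, deriv_const]
    rw [hosc t] at h3
    simp only [PiLp.smul_apply, smul_eq_mul] at h3
    have hk : ‖deriv (deriv γ) t‖ ≠ 0 := norm_ne_zero_iff.mpr (hκ₁ t)
    have h4 : -(‖deriv (deriv γ) t‖ ^ 2) ≠ 0 := by
      simpa using pow_ne_zero 2 hk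
    exact (mul_eq_zero.mp h3).resolve_left h4
  -- differentiability of coordinates of deriv γ
  have hdT : ∀ (k : Fin (2*n+s)), Differentiable ℝ (fun u => deriv γ u k) := by
    intro k
    exact ((EuclideanSpace.proj k).differentiable.comp hγ' : _)
  -- Step B : γ''' = -q² γ'
  have hB : ∀ (t : ℝ) (k : Fin (2*n+s)),
      deriv (deriv (deriv γ)) t k = -(q^2) * deriv γ t k := by
    intro t k
    rw [← deriv_euclid_apply hγ'' t k]
    by_cases h1 : (k:ℕ) < n
    · have e1 : (fun u => deriv (deriv γ) u k)
          = fun u => -q * deriv γ u ⟨n + (k:ℕ), by omega⟩ := by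
        funext u
        rw [hmag' u]
        congr 1
        simp only [phi, WithLp.ofLp_toLp]
        rw [dif_pos h1]
      rw [e1, deriv_const_mul _ ((hdT _) t), deriv_euclid_apply hγ' t,
        hmag' t]
      have hp : phi n s (deriv γ t) ⟨n + (k:ℕ), by omega⟩
          = -(deriv γ t k) := by
        simp only [phi, WithLp.ofLp_toLp]
        rw [dif_neg (show ¬ ((⟨n + (k:ℕ), by omega⟩ : Fin (2*n+s)) : ℕ) < n by simp),
          dif_pos (show ((⟨n + (k:ℕ), by omega⟩ : Fin (2*n+s)) : ℕ) < 2*n by simp; omega)]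
        have hidx : (⟨n + (k:ℕ) - n, by omega⟩ : Fin (2*n+s)) = k := by
          apply Fin.ext
          show n + (k:ℕ) - n = (k:ℕ)
          omega
        rw [hidx]
      rw [hp]; ring
    · by_cases h2 : (k:ℕ) < 2*n
      · have e1 : (fun u => deriv (deriv γ) u k)
            = fun u => q * deriv γ u ⟨(k:ℕ) - n, by omega⟩ := by
          funext u
          rw [hmag' u]
          simp only [phi, WithLp.ofLp_toLp]
          rw [dif_neg h1, dif_pos h2]
          ring
        rw [e1, deriv_const_mul _ ((hdT _) t), deriv_euclid_apply hγ' t,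
          hmag' t]
        have hp : phi n s (deriv γ t) ⟨(k:ℕ) - n, by omega⟩
            = deriv γ t k := by
          simp only [phi, WithLp.ofLp_toLp]
          rw [dif_pos (show ((⟨(k:ℕ) - n, by omega⟩ : Fin (2*n+s)) : ℕ) < n by simp; omega)]
          have hidx : (⟨n + ((k:ℕ) - n), by omega⟩ : Fin (2*n+s)) = k := by
            apply Fin.ext
            show n + ((k:ℕ) - n) = (k:ℕ)
            omega
          rw [hidx]
        rw [hp]; ring
      · have hz : (fun u => deriv (deriv γ) u k) = fun _ => (0:ℝ) := by
          funext u
          rw [hmag' u]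
          have hp : phi n s (deriv γ u) k = 0 := by
            simp only [phi, WithLp.ofLp_toLp]
            rw [dif_neg h1, dif_neg h2]
          rw [hp]; ring
        rw [hz, deriv_const]
        have : deriv γ t k = 0 := by
          have := hleg t ⟨(k:ℕ) - 2*n, by omega⟩
          have hk : idxA n s ⟨(k:ℕ) - 2*n, by omega⟩ = k :=
            Fin.ext (show 2*n + ((k:ℕ) - 2*n) = (k:ℕ) by omega)
          rwa [hk] at this
        rw [this]; ring
  refine ⟨hleg, ?_⟩
  intro t
  have hvec : (‖deriv (deriv γ) t‖ ^ 2 - q^2) • deriv γ t = 0 := by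
    ext k
    have hb := hB t k
    rw [hosc t] at hb
    simp only [PiLp.smul_apply, smul_eq_mul] at hb ⊢
    simp only [PiLp.zero_apply]
    nlinarith [hb]
  have hT : deriv γ t ≠ 0 := by
    intro h
    have := hunit t
    rw [h] at this
    simp at this
  have hs2 : ‖deriv (deriv γ) t‖ ^ 2 = q^2 := by
    rcases smul_eq_zero.mp hvec with h | h
    · linarith [sub_eq_zero.mp (by linarith [h] : ‖deriv (deriv γ) t‖ ^ 2 - q^2 = 0)]
    · exact absurd h hT
  calc ‖deriv (deriv γ) t‖ = Real.sqrt (‖deriv (deriv γ) t‖ ^ 2) :=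
        (Real.sqrt_sq (norm_nonneg _)).symm
    _ = Real.sqrt (q^2) := by rw [hs2]
    _ = |q| := Real.sqrt_sq_eq_abs q
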